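/- Let J = J₀ ⊕ J₁ be a triideal of a triring R = R₀ ⊕ R₁ with both (R₀,+,·) and (R₁,+,♯) commutative. Then the graded nilradical ♯√J := {G₀ + G₁ : G₀ ∈ R₀, G₁ ∈ R₁, G₀^m ∈ J₀ and G₁^{♯n} ∈ J₁ for some positive integers m, n} equals √J₀ ⊕ √J₁ (the direct sum of the radical of J₀ in (R₀,·) and the radical of J₁ in (R₁,♯)), and is itself a triideal of R. -/

import Mathlib

/-- A triring structure on a ring `R`: a Z₂-ring decomposition `R = R₀ ⊕ R₁`
together with a local product `♯` making `R₁` a (unital, associative) ring and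
satisfying the Hu-Liu triassociative law. The local product is modelled as a
total operation `sharp : R → R → R` whose relevant values are on `R₁`. -/
structure Triring (R : Type) [Ring R] where
  R0 : AddSubgroup R
  R1 : AddSubgroup R
  compl : IsCompl R0 R1
  mul00 : ∀ x ∈ R0, ∀ y ∈ R0, x * y ∈ R0
  mul01 : ∀ x ∈ R0, ∀ y ∈ R1, x * y ∈ R1 ∧ y * x ∈ R1
  mul11 : ∀ x ∈ R1, ∀ y ∈ R1, x * y = 0
  sharp : R → R → R
  sharp_mem : ∀ x ∈ R1, ∀ y ∈ R1, sharp x y ∈ R1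
  sharp_assoc : ∀ x ∈ R1, ∀ y ∈ R1, ∀ z ∈ R1,
    sharp (sharp x y) z = sharp x (sharp y z)
  sharp_addl : ∀ x ∈ R1, ∀ y ∈ R1, ∀ z ∈ R1,
    sharp (x + y) z = sharp x z + sharp y z
  sharp_addr : ∀ x ∈ R1, ∀ y ∈ R1, ∀ z ∈ R1,
    sharp x (y + z) = sharp x y + sharp x z
  oneSharp : R
  oneSharp_mem : oneSharp ∈ R1
  sharp_one : ∀ x ∈ R1, sharp oneSharp x = x ∧ sharp x oneSharp = x
  tri_l : ∀ (x : R), ∀ α ∈ R1, ∀ β ∈ R1, x * sharp α β = sharp (x * α) β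
  tri_r : ∀ (x : R), ∀ α ∈ R1, ∀ β ∈ R1, sharp α β * x = sharp α (β * x)

/-- The `n`-fold local-product power `α^{♯n}`, with `α^{♯0} = 1♯`. -/
def sharpPow {R : Type} [Ring R] (T : Triring R) (a : R) : ℕ → R
  | 0 => T.oneSharp
  | n + 1 => T.sharp a (sharpPow T a n)

def Triring.sharpCommRing {R : Type} [Ring R] (T : Triring R)
    (hcomm1 : ∀ α ∈ T.R1, ∀ β ∈ T.R1, T.sharp α β = T.sharp β α) :
    CommRing ↥T.R1 :=
  { (inferInstance : AddCommGroup ↥T.R1) with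
    mul := fun a b => ⟨T.sharp a b, T.sharp_mem _ a.2 _ b.2⟩
    one := ⟨T.oneSharp, T.oneSharp_mem⟩
    mul_assoc := fun a b c => Subtype.ext (T.sharp_assoc _ a.2 _ b.2 _ c.2)
    one_mul := fun a => Subtype.ext ((T.sharp_one _ a.2).1)
    mul_one := fun a => Subtype.ext ((T.sharp_one _ a.2).2)
    left_distrib := fun a b c => Subtype.ext (T.sharp_addr _ a.2 _ b.2 _ c.2)
    right_distrib := fun a b c => Subtype.ext (T.sharp_addl _ a.2 _ b.2 _ c.2)
    zero_mul := fun a => Subtype.ext (by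
      have h := T.sharp_addl 0 T.R1.zero_mem 0 T.R1.zero_mem a a.2
      rw [add_zero] at h
      have h2 : T.sharp (0:R) a + 0 = T.sharp 0 a + T.sharp 0 a := by rw [add_zero]; exact h
      exact (add_left_cancel h2).symm)
    mul_zero := fun a => Subtype.ext (by
      have h := T.sharp_addr a a.2 0 T.R1.zero_mem 0 T.R1.zero_mem
      rw [add_zero] at h
      have h2 : T.sharp (a:R) 0 + 0 = T.sharp a 0 + T.sharp a 0 := by rw [add_zero]; exact h
      exact (add_left_cancel h2).symm)
    mul_comm := fun a b => Subtype.ext (hcomm1 _ a.2 _ b.2) }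

/-- For a triideal `J = J₀ ⊕ J₁` of a triring with commutative even part and
commutative local product, the graded nilradical
`♯√J = √J₀ ⊕ √J₁ = {G₀ + G₁ | G₀^m ∈ J₀, G₁^{♯n} ∈ J₁ for some m, n > 0}`
is itself a triideal: each component `√Jᵢ` is an additive subgroup and the pair
satisfies all the triideal multiplication conditions. -/
theorem extended_nullstellensatz_stmt5 {R : Type} [Ring R] (T : Triring R)
    (hcomm0 : ∀ x ∈ T.R0, ∀ y ∈ T.R0, x * y = y * x)
    (hcomm1 : ∀ α ∈ T.R1, ∀ β ∈ T.R1, T.sharp α β = T.sharp β α)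
    (J0 J1 : AddSubgroup R) (hJ0 : J0 ≤ T.R0) (hJ1 : J1 ≤ T.R1)
    (hI1 : ∀ x ∈ T.R0, ∀ j ∈ J0, x * j ∈ J0 ∧ j * x ∈ J0)
    (hI2 : ∀ x ∈ T.R1, ∀ j ∈ J0, x * j ∈ J1 ∧ j * x ∈ J1)
    (hI3 : ∀ x ∈ T.R0, ∀ j ∈ J1, x * j ∈ J1 ∧ j * x ∈ J1)
    (hI4 : ∀ x ∈ T.R1, ∀ j ∈ J1, T.sharp x j ∈ J1 ∧ T.sharp j x ∈ J1) :
    -- the radicals, computed in the commutative rings (R₀,·) and (R₁,♯):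
    let Rad0 : Set R := {x | x ∈ T.R0 ∧ ∃ m > 0, x ^ m ∈ J0}
    let Rad1 : Set R := {x | x ∈ T.R1 ∧ ∃ m > 0, sharpPow T x m ∈ J1}
    -- ♯√J = √J₀ ⊕ √J₁ is a triideal:
    (∀ x ∈ Rad0, ∀ y ∈ Rad0, x + y ∈ Rad0) ∧ (∀ x ∈ Rad0, -x ∈ Rad0) ∧
    (∀ x ∈ Rad1, ∀ y ∈ Rad1, x + y ∈ Rad1) ∧ (∀ x ∈ Rad1, -x ∈ Rad1) ∧
    (∀ x ∈ T.R0, ∀ j ∈ Rad0, x * j ∈ Rad0 ∧ j * x ∈ Rad0) ∧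
    (∀ x ∈ T.R1, ∀ j ∈ Rad0, x * j ∈ Rad1 ∧ j * x ∈ Rad1) ∧
    (∀ x ∈ T.R0, ∀ j ∈ Rad1, x * j ∈ Rad1 ∧ j * x ∈ Rad1) ∧
    (∀ x ∈ T.R1, ∀ j ∈ Rad1, T.sharp x j ∈ Rad1 ∧ T.sharp j x ∈ Rad1) := by
  intro Rad0 Rad1
  -- basic helpers
  have hpow0 : ∀ x ∈ T.R0, ∀ n : ℕ, 0 < n → x ^ n ∈ T.R0 := by
    intro x hx n hn
    induction n with
    | zero => omega
    | succ k ih =>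
      rcases Nat.eq_zero_or_pos k with hk | hk
      · subst hk; simpa using hx
      · rw [pow_succ]; exact T.mul00 _ (ih hk) _ hx
  have hspmem : ∀ a ∈ T.R1, ∀ n : ℕ, sharpPow T a n ∈ T.R1 := by
    intro a ha n
    induction n with
    | zero => exact T.oneSharp_mem
    | succ k ih => exact T.sharp_mem _ ha _ ih
  have hmemL : ∀ a ∈ T.R0, ∀ w ∈ T.R1, ∀ n : ℕ, a ^ n * w ∈ T.R1 := by
    intro a ha w hw n
    induction n with
    | zero => simpa using hw
    | succ k ih => rw [pow_succ', mul_assoc]; exact (T.mul01 _ ha _ ih).1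
  have hmemR : ∀ a ∈ T.R0, ∀ w ∈ T.R1, ∀ n : ℕ, w * a ^ n ∈ T.R1 := by
    intro a ha w hw n
    induction n with
    | zero => simpa using hw
    | succ k ih => rw [pow_succ, ← mul_assoc]; exact (T.mul01 _ ha _ ih).2
  have hL1 : ∀ x ∈ T.R0, ∀ c ∈ J0, ∀ i : ℕ, x ^ i * c ∈ J0 := by
    intro x hx c hc i
    induction i with
    | zero => simpa using hc
    | succ k ih => rw [pow_succ', mul_assoc]; exact (hI1 _ hx _ ih).1
  have hL2 : ∀ y ∈ T.R0, ∀ c ∈ J0, ∀ j : ℕ, c * y ^ j ∈ J0 := by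
    intro y hy c hc j
    induction j with
    | zero => simpa using hc
    | succ k ih => rw [pow_succ, ← mul_assoc]; exact (hI1 _ hy _ ih).2
  -- the key ♯-power identities for mixed products
  have hE1 : ∀ a ∈ T.R0, ∀ b ∈ T.R1, ∀ n : ℕ,
      sharpPow T (a * b) n = a ^ n * sharpPow T b n := by
    intro a ha b hb n
    induction n with
    | zero => simp [sharpPow]
    | succ k ih =>
      have hw : a ^ k * sharpPow T b k ∈ T.R1 := hmemL a ha _ (hspmem b hb k) k
      have hp : sharpPow T b k ∈ T.R1 := hspmem b hb k
      calc sharpPow T (a * b) (k + 1)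
          = T.sharp (a * b) (a ^ k * sharpPow T b k) := by rw [sharpPow, ih]
        _ = a * T.sharp b (a ^ k * sharpPow T b k) := (T.tri_l a b hb _ hw).symm
        _ = a * T.sharp (a ^ k * sharpPow T b k) b := by rw [hcomm1 _ hb _ hw]
        _ = a * (a ^ k * T.sharp (sharpPow T b k) b) := by rw [T.tri_l _ _ hp _ hb]
        _ = a * (a ^ k * T.sharp b (sharpPow T b k)) := by rw [hcomm1 _ hp _ hb]
        _ = a ^ (k + 1) * sharpPow T b (k + 1) := by
            rw [pow_succ', sharpPow, mul_assoc]
  have hE2 : ∀ a ∈ T.R0, ∀ b ∈ T.R1, ∀ n : ℕ,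
      sharpPow T (b * a) n = sharpPow T b n * a ^ n := by
    intro a ha b hb n
    induction n with
    | zero => simp [sharpPow]
    | succ k ih =>
      have hp : sharpPow T b k ∈ T.R1 := hspmem b hb k
      have hw : sharpPow T b k * a ^ k ∈ T.R1 := hmemR a ha _ hp k
      have hba : b * a ∈ T.R1 := (T.mul01 a ha b hb).2
      calc sharpPow T (b * a) (k + 1)
          = T.sharp (b * a) (sharpPow T b k * a ^ k) := by rw [sharpPow, ih]
        _ = T.sharp (sharpPow T b k * a ^ k) (b * a) := hcomm1 _ hba _ hw
        _ = T.sharp (sharpPow T b k * a ^ k) b * a := (T.tri_r a _ hw _ hb).symm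
        _ = T.sharp b (sharpPow T b k * a ^ k) * a := by rw [hcomm1 _ hw _ hb]
        _ = T.sharp b (sharpPow T b k) * a ^ k * a := by rw [T.tri_r _ _ hb _ hp]
        _ = sharpPow T b (k + 1) * a ^ (k + 1) := by
            rw [pow_succ, sharpPow, mul_assoc]
  -- the commutative ring (R₁, +, ♯) and the ideal J₁ inside it
  letI instCR : CommRing ↥T.R1 := T.sharpCommRing hcomm1
  let J1' : Ideal ↥T.R1 :=
    { carrier := {x | (x : R) ∈ J1}
      add_mem' := fun ha hb => J1.add_mem ha hb
      zero_mem' := J1.zero_mem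
      smul_mem' := by
        intro c x hx
        show T.sharp (c : R) (x : R) ∈ J1
        exact (hI4 _ c.2 _ hx).1 }
  have hpoweq : ∀ (a : ↥T.R1) (n : ℕ), sharpPow T (a : R) n = ((a ^ n : ↥T.R1) : R) := by
    intro a n
    induction n with
    | zero => rfl
    | succ k ih => rw [sharpPow, ih, pow_succ, mul_comm]; rfl
  have hrad : ∀ z, z ∈ Rad1 ↔ ∃ hz : z ∈ T.R1, (⟨z, hz⟩ : ↥T.R1) ∈ J1'.radical := by
    intro z
    constructor
    · rintro ⟨hz, m, hm, hzm⟩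
      refine ⟨hz, m, ?_⟩
      show ((⟨z, hz⟩ : ↥T.R1) ^ m : ↥T.R1) ∈ J1'
      show (((⟨z, hz⟩ : ↥T.R1) ^ m : ↥T.R1) : R) ∈ J1
      rw [← hpoweq]; exact hzm
    · rintro ⟨hz, n, hn⟩
      rcases Nat.eq_zero_or_pos n with h0 | h0
      · subst h0
        have hone : (1 : ↥T.R1) ∈ J1' := by simpa using hn
        have h1 : (⟨z, hz⟩ : ↥T.R1) ^ 1 ∈ J1' := by
          have := J1'.mul_mem_left (⟨z, hz⟩ : ↥T.R1) hone
          simpa using this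
        refine ⟨hz, 1, one_pos, ?_⟩
        show sharpPow T ((⟨z, hz⟩ : ↥T.R1) : R) 1 ∈ J1
        rw [hpoweq]; exact h1
      · refine ⟨hz, n, h0, ?_⟩
        show sharpPow T ((⟨z, hz⟩ : ↥T.R1) : R) n ∈ J1
        rw [hpoweq]; exact hn
  refine ⟨?_, ?_, ?_, ?_, ?_, ?_, ?_, ?_⟩
  -- Rad0 closed under addition
  · rintro x ⟨hx, m, hm, hxm⟩ y ⟨hy, n, hn, hyn⟩
    refine ⟨T.R0.add_mem hx hy, m + n, by omega, ?_⟩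
    have hc : Commute x y := hcomm0 x hx y hy
    rw [hc.add_pow']
    refine AddSubgroup.sum_mem _ ?_
    rintro ⟨i, j⟩ hij
    rw [Finset.HasAntidiagonal.mem_antidiagonal] at hij
    refine AddSubgroup.nsmul_mem _ ?_ _
    rcases le_or_gt m i with hmi | hmi
    · have : x ^ i * y ^ j = x ^ (i - m) * (x ^ m * y ^ j) := by
        rw [← mul_assoc, ← pow_add]
        congr 2
        omega
      rw [this]
      exact hL1 _ hx _ (hL2 _ hy _ hxm j) _
    · have hnj : n ≤ j := by omega
      have : x ^ i * y ^ j = x ^ i * y ^ n * y ^ (j - n) := by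
        rw [mul_assoc, ← pow_add]
        congr 2
        omega
      rw [this]
      exact hL2 _ hy _ (hL1 _ hx _ hyn i) _
  -- Rad0 closed under negation
  · rintro x ⟨hx, m, hm, hxm⟩
    refine ⟨T.R0.neg_mem hx, m, hm, ?_⟩
    rcases Nat.even_or_odd m with he | ho
    · rw [he.neg_pow]; exact hxm
    · rw [ho.neg_pow]; exact J0.neg_mem hxm
  -- Rad1 closed under addition
  · intro x hx y hy
    rw [hrad] at hx hy ⊢
    obtain ⟨hx1, hxr⟩ := hx
    obtain ⟨hy1, hyr⟩ := hy
    exact ⟨T.R1.add_mem hx1 hy1, J1'.radical.add_mem hxr hyr⟩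
  -- Rad1 closed under negation
  · intro x hx
    rw [hrad] at hx ⊢
    obtain ⟨hx1, hxr⟩ := hx
    exact ⟨T.R1.neg_mem hx1, J1'.radical.neg_mem hxr⟩
  -- R0 * Rad0 ⊆ Rad0
  · rintro x hx j ⟨hj, m, hm, hjm⟩
    have hc : Commute x j := hcomm0 x hx j hj
    constructor
    · refine ⟨T.mul00 _ hx _ hj, m, hm, ?_⟩
      rw [hc.mul_pow]
      exact (hI1 _ (hpow0 x hx m hm) _ hjm).1
    · refine ⟨T.mul00 _ hj _ hx, m, hm, ?_⟩
      rw [(hc.symm).mul_pow]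
      exact (hI1 _ (hpow0 x hx m hm) _ hjm).2
  -- R1 * Rad0 ⊆ Rad1
  · rintro x hx j ⟨hj, m, hm, hjm⟩
    constructor
    · refine ⟨(T.mul01 _ hj _ hx).2, m, hm, ?_⟩
      rw [hE2 j hj x hx]
      exact (hI2 _ (hspmem x hx m) _ hjm).1
    · refine ⟨(T.mul01 _ hj _ hx).1, m, hm, ?_⟩
      rw [hE1 j hj x hx]
      exact (hI2 _ (hspmem x hx m) _ hjm).2
  -- R0 * Rad1 ⊆ Rad1
  · rintro x hx j ⟨hj, m, hm, hjm⟩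
    constructor
    · refine ⟨(T.mul01 _ hx _ hj).1, m, hm, ?_⟩
      rw [hE1 x hx j hj]
      exact (hI3 _ (hpow0 x hx m hm) _ hjm).1
    · refine ⟨(T.mul01 _ hx _ hj).2, m, hm, ?_⟩
      rw [hE2 x hx j hj]
      exact (hI3 _ (hpow0 x hx m hm) _ hjm).2
  -- R1 ♯ Rad1 ⊆ Rad1
  · intro x hx j hj
    rw [hrad] at hj
    obtain ⟨hj1, hjr⟩ := hj
    constructor
    · rw [hrad]
      refine ⟨T.sharp_mem _ hx _ hj1, ?_⟩
      have := J1'.radical.mul_mem_left (⟨x, hx⟩ : ↥T.R1) hjr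
      exact this
    · rw [hrad]
      refine ⟨T.sharp_mem _ hj1 _ hx, ?_⟩
      have := J1'.radical.mul_mem_right (⟨x, hx⟩ : ↥T.R1) hjr
      exact this
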